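/- Let μ be a Borel measure finite on dyadic cubes and 𝒮 a μ-sparse family of dyadic cubes. Then for every f ∈ L²(μ), ∑_{Q ∈ 𝒮} |⟨f⟩^μ_Q|² μ(Q) ≤ C ‖f‖²_{L²(μ)}, where C depends only on the sparseness constant. -/

import Mathlib

open MeasureTheory Filter
open scoped ENNReal

/-- A dyadic cube in `ℝⁿ`, encoded by its generation `k` (side length `2 ^ k`)
and position `m` (corner at `m * 2 ^ k`). -/
structure DyadicCube (n : ℕ) where
  k : ℤ
  m : Fin n → ℤ

namespace DyadicCube

variable {n : ℕ}

/-- The underlying half-open cube in `ℝⁿ`. -/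
def toSet (Q : DyadicCube n) : Set (Fin n → ℝ) :=
  {x | ∀ i, (Q.m i : ℝ) * (2 : ℝ) ^ Q.k ≤ x i ∧ x i < ((Q.m i : ℝ) + 1) * (2 : ℝ) ^ Q.k}

/-- The side length `ℓ(Q)` of the cube. -/
noncomputable def len (Q : DyadicCube n) : ℝ := (2 : ℝ) ^ Q.k

/-- The dyadic parent `Q^{(1)}`. -/
def parent (Q : DyadicCube n) : DyadicCube n :=
  ⟨Q.k + 1, fun i => Int.fdiv (Q.m i) 2⟩

/-- The ancestor `Q^{(r)}` of order `r`. -/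
def iterParent (Q : DyadicCube n) (r : ℕ) : DyadicCube n := parent^[r] Q

/-- The dyadic child of `Q` indexed by `ε : Fin n → Bool`. -/
def child (Q : DyadicCube n) (ε : Fin n → Bool) : DyadicCube n :=
  ⟨Q.k - 1, fun i => 2 * Q.m i + (if ε i then 1 else 0)⟩

/-- The descendant of `Q` of order `r` indexed by `v`; these enumerate `ch^r Q`. -/
def childIter (Q : DyadicCube n) (r : ℕ) (v : Fin n → Fin (2 ^ r)) : DyadicCube n :=
  ⟨Q.k - r, fun i => 2 ^ r * Q.m i + ((v i : ℕ) : ℤ)⟩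

end DyadicCube

variable {n : ℕ}

/-- The `μ`-average of `f` over a dyadic cube (zero when the cube is `μ`-null). -/
noncomputable def avg (μ : Measure (Fin n → ℝ)) (f : (Fin n → ℝ) → ℝ) (Q : DyadicCube n) : ℝ :=
  if μ Q.toSet = 0 then 0 else (∫ x in Q.toSet, f x ∂μ) / (μ Q.toSet).toReal

/-- The expectation `E^b_Q f = (⟨f⟩_Q / ⟨b⟩_Q) · b · 1_Q` adapted to an accretive function `b`. -/
noncomputable def Eb (μ : Measure (Fin n → ℝ)) (b f : (Fin n → ℝ) → ℝ) (Q : DyadicCube n) :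
    (Fin n → ℝ) → ℝ :=
  fun x => (avg μ f Q / avg μ b Q) * Q.toSet.indicator b x

/-- The martingale difference `Δ^b_Q f = ∑_{Q' ∈ ch Q} E^b_{Q'} f − E^b_Q f`. -/
noncomputable def Db (μ : Measure (Fin n → ℝ)) (b f : (Fin n → ℝ) → ℝ) (Q : DyadicCube n) :
    (Fin n → ℝ) → ℝ :=
  fun x => (∑ ε : Fin n → Bool, Eb μ b f (Q.child ε) x) - Eb μ b f Q x

/-- The expectation `E^μ_Q f = (⟨f⟩_Q / ⟨b_Q⟩_Q) b_Q` adapted to an accretive system. -/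
noncomputable def Esys (μ : Measure (Fin n → ℝ)) (b : DyadicCube n → (Fin n → ℝ) → ℝ)
    (f : (Fin n → ℝ) → ℝ) (Q : DyadicCube n) : (Fin n → ℝ) → ℝ :=
  fun x => (avg μ f Q / avg μ (b Q) Q) * b Q x

/-- The martingale difference `Δ^μ_Q` adapted to an accretive system. -/
noncomputable def Dsys (μ : Measure (Fin n → ℝ)) (b : DyadicCube n → (Fin n → ℝ) → ℝ)
    (f : (Fin n → ℝ) → ℝ) (Q : DyadicCube n) : (Fin n → ℝ) → ℝ :=
  fun x => (∑ ε : Fin n → Bool, Esys μ b f (Q.child ε) x) - Esys μ b f Q x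

/-- The (formal) adjoint `(Δ^μ_Q)^*`, given by its explicit formula. -/
noncomputable def DsysStar (μ : Measure (Fin n → ℝ)) (b : DyadicCube n → (Fin n → ℝ) → ℝ)
    (f : (Fin n → ℝ) → ℝ) (Q : DyadicCube n) : (Fin n → ℝ) → ℝ :=
  fun x => ∑ ε : Fin n → Bool,
    (Q.child ε).toSet.indicator
      (fun _ => avg μ (fun y => b (Q.child ε) y * f y) (Q.child ε)
                  / avg μ (b (Q.child ε)) (Q.child ε)
                - avg μ (fun y => b Q y * f y) Q / avg μ (b Q) Q) x

/-- The set `𝒮_b` of cubes where the accretive system changes between generations. -/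
def Sb (b : DyadicCube n → (Fin n → ℝ) → ℝ) : Set (DyadicCube n) :=
  {Q | b Q ≠ fun x => Q.toSet.indicator (b Q.parent) x}

/-- An `L^∞(μ)`-accretive system with constants `δ` and `C`. -/
structure AccretiveSystem (μ : Measure (Fin n → ℝ)) (b : DyadicCube n → (Fin n → ℝ) → ℝ)
    (δ C : ℝ) : Prop where
  meas : ∀ Q : DyadicCube n, Measurable (b Q)
  supp : ∀ Q : DyadicCube n, ∀ x, x ∉ Q.toSet → b Q x = 0
  bdd : ∀ Q : DyadicCube n, eLpNorm (b Q) ∞ μ ≤ ENNReal.ofReal C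
  acc : ∀ Q : DyadicCube n, δ * (μ Q.toSet).toReal ≤ |∫ x in Q.toSet, b Q x ∂μ|

/-- A family of dyadic cubes is `μ`-sparse (i.e. `μ`-Carleson) with constant `Λ`. -/
def IsSparse (μ : Measure (Fin n → ℝ)) (S : Set (DyadicCube n)) (Λ : ℝ≥0∞) : Prop :=
  ∀ R : DyadicCube n,
    ∑' Q : {Q : DyadicCube n // Q ∈ S ∧ Q.toSet ⊆ R.toSet}, μ Q.1.toSet ≤ Λ * μ R.toSet
namespace SparseAux
open DyadicCube

variable {n : ℕ}

noncomputable instance : DecidableEq (DyadicCube n) := Classical.decEq _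

lemma ext' {Q R : DyadicCube n} (hk : Q.k = R.k) (hm : Q.m = R.m) : Q = R := by
  cases Q; cases R; simp_all

lemma measurableSet_toSet (Q : DyadicCube n) : MeasurableSet Q.toSet := by
  have : Q.toSet = Set.pi Set.univ (fun i =>
      Set.Ico ((Q.m i : ℝ) * (2 : ℝ) ^ Q.k) (((Q.m i : ℝ) + 1) * (2 : ℝ) ^ Q.k)) := by
    ext x; simp [toSet, Set.mem_pi, Set.mem_Ico]
  rw [this]
  exact MeasurableSet.univ_pi fun i => measurableSet_Ico

lemma fdiv_two_le (a : ℤ) : 2 * Int.fdiv a 2 ≤ a ∧ a ≤ 2 * Int.fdiv a 2 + 1 := by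
  rw [Int.fdiv_eq_ediv_of_nonneg _ (by norm_num)]
  omega

lemma toSet_subset_parent (Q : DyadicCube n) : Q.toSet ⊆ Q.parent.toSet := by
  intro x hx i
  obtain ⟨h1, h2⟩ := hx i
  have hpow : (2:ℝ) ^ (Q.k + 1) = (2:ℝ) ^ Q.k * 2 := by
    rw [zpow_add_one₀ (by norm_num)]
  have hp : (0:ℝ) < (2:ℝ) ^ Q.k := by positivity
  obtain ⟨ha, hb⟩ := fdiv_two_le (Q.m i)
  have ha' : ((2 * Int.fdiv (Q.m i) 2 : ℤ) : ℝ) ≤ (Q.m i : ℝ) := by exact_mod_cast ha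
  have hb' : ((Q.m i : ℝ)) ≤ ((2 * Int.fdiv (Q.m i) 2 + 1 : ℤ) : ℝ) := by exact_mod_cast hb
  push_cast at ha' hb'
  constructor
  · show ((Q.parent.m i : ℝ)) * (2:ℝ) ^ (Q.k + 1) ≤ x i
    simp only [parent, hpow]
    nlinarith
  · show x i < ((Q.parent.m i : ℝ) + 1) * (2:ℝ) ^ (Q.k + 1)
    simp only [parent, hpow]
    nlinarith

lemma iterParent_succ (Q : DyadicCube n) (r : ℕ) :
    Q.iterParent (r + 1) = (Q.iterParent r).parent :=
  Function.iterate_succ_apply' _ _ _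

lemma toSet_subset_iterParent (Q : DyadicCube n) (r : ℕ) :
    Q.toSet ⊆ (Q.iterParent r).toSet := by
  induction r with
  | zero => exact subset_rfl
  | succ r ih => rw [iterParent_succ]; exact ih.trans (toSet_subset_parent _)

lemma k_iterParent (Q : DyadicCube n) (r : ℕ) : (Q.iterParent r).k = Q.k + r := by
  induction r with
  | zero => simp [iterParent]
  | succ r ih => rw [iterParent_succ]; simp [parent, ih]; ring

lemma disjoint_of_same_k {Q R : DyadicCube n} (hk : Q.k = R.k) (hne : Q ≠ R) :
    Disjoint Q.toSet R.toSet := by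
  have : ∃ i, Q.m i ≠ R.m i := by
    by_contra h
    push_neg at h
    exact hne (ext' hk (funext h))
  obtain ⟨i, hi⟩ := this
  rw [Set.disjoint_left]
  intro x hxQ hxR
  obtain ⟨h1, h2⟩ := hxQ i
  obtain ⟨h3, h4⟩ := hxR i
  rw [hk] at h1 h2
  have hp : (0:ℝ) < (2:ℝ) ^ R.k := by positivity
  rcases lt_or_gt_of_ne hi with h | h
  · have : (Q.m i : ℝ) + 1 ≤ (R.m i : ℝ) := by exact_mod_cast h
    nlinarith
  · have : (R.m i : ℝ) + 1 ≤ (Q.m i : ℝ) := by exact_mod_cast h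
    nlinarith

lemma child_k (Q : DyadicCube n) (ε : Fin n → Bool) : (Q.child ε).k = Q.k - 1 := rfl

lemma parent_child (Q : DyadicCube n) (ε : Fin n → Bool) : (Q.child ε).parent = Q := by
  apply ext'
  · simp [parent, child]
  · funext i
    simp only [parent, child]
    rw [Int.fdiv_eq_ediv_of_nonneg _ (by norm_num)]
    cases ε i <;> simp <;> omega

lemma child_inj {Q : DyadicCube n} {ε ε' : Fin n → Bool} (h : Q.child ε = Q.child ε') :
    ε = ε' := by
  funext i
  have := congrArg (fun R => R.m i) h
  simp only [child] at this
  cases hε : ε i <;> cases hε' : ε' i <;> simp [hε, hε'] at this ⊢ <;> omega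

lemma eq_child_of_parent_eq {Q R : DyadicCube n} (h : Q.parent = R) :
    ∃ ε, Q = R.child ε := by
  classical
  refine ⟨fun i => decide (Q.m i = 2 * R.m i + 1), ?_⟩
  have hk : Q.k + 1 = R.k := by rw [← h]; rfl
  have hm : ∀ i, Int.fdiv (Q.m i) 2 = R.m i := fun i => by
    have := congrArg (fun T => T.m i) h; simpa [parent] using this
  apply ext'
  · simp [child]; omega
  · funext i
    have h2 := hm i
    rw [Int.fdiv_eq_ediv_of_nonneg _ (by norm_num)] at h2
    simp only [child]
    by_cases hc : Q.m i = 2 * R.m i + 1 <;> simp [hc] <;> omega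

lemma interval_split (m : ℤ) (k : ℤ) (t : ℝ) :
    ((m:ℝ) * 2 ^ k ≤ t ∧ t < ((m:ℝ) + 1) * 2 ^ k) ↔
    (((2*m:ℤ):ℝ) * 2 ^ (k-1) ≤ t ∧ t < (((2*m:ℤ):ℝ) + 1) * 2 ^ (k-1)) ∨
    (((2*m+1:ℤ):ℝ) * 2 ^ (k-1) ≤ t ∧ t < (((2*m+1:ℤ):ℝ) + 1) * 2 ^ (k-1)) := by
  have hpow : (2:ℝ) ^ k = (2:ℝ) ^ (k-1) * 2 := by
    rw [← zpow_add_one₀ (by norm_num : (2:ℝ) ≠ 0)]; ring_nf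
  have hp : (0:ℝ) < (2:ℝ) ^ (k-1) := by positivity
  push_cast
  rw [hpow]
  constructor
  · rintro ⟨h1, h2⟩
    rcases le_or_gt (((2*m:ℝ)) + 1) (t / (2:ℝ)^(k-1)) with h | h
    · right
      rw [le_div_iff₀ hp] at h
      constructor <;> nlinarith
    · left
      rw [div_lt_iff₀ hp] at h
      constructor <;> nlinarith
  · rintro (⟨h1, h2⟩ | ⟨h1, h2⟩) <;> constructor <;> nlinarith

lemma iUnion_child (Q : DyadicCube n) : (⋃ ε : Fin n → Bool, (Q.child ε).toSet) = Q.toSet := by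
  classical
  ext x
  simp only [Set.mem_iUnion]
  constructor
  · rintro ⟨ε, hx⟩
    intro i
    obtain ⟨h1, h2⟩ := hx i
    rw [interval_split (Q.m i) Q.k (x i)]
    simp only [child] at h1 h2
    cases hε : ε i
    · left; rw [hε] at h1 h2; norm_num at h1 h2; push_cast at h1 h2 ⊢
      exact ⟨by linarith, by linarith⟩
    · right; rw [hε] at h1 h2; norm_num at h1 h2; push_cast at h1 h2 ⊢
      exact ⟨by linarith, by linarith⟩
  · intro hx
    have key : ∀ i, ∃ b : Bool, (((2*Q.m i + (if b then 1 else 0) : ℤ):ℝ)) * 2 ^ (Q.k-1) ≤ x i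
        ∧ x i < (((2*Q.m i + (if b then 1 else 0) : ℤ):ℝ) + 1) * 2 ^ (Q.k-1) := by
      intro i
      rcases (interval_split (Q.m i) Q.k (x i)).1 (hx i) with h | h
      · refine ⟨false, ?_⟩; norm_num; push_cast at h ⊢; exact ⟨h.1, h.2⟩
      · refine ⟨true, ?_⟩; norm_num; push_cast at h ⊢; exact ⟨h.1, h.2⟩
    choose ε hε using key
    refine ⟨ε, fun i => ?_⟩
    have := hε i
    simp only [child]
    exact this

lemma child_ne (Q : DyadicCube n) {ε ε' : Fin n → Bool} (h : ε ≠ ε') :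
    Q.child ε ≠ Q.child ε' := fun hc => h (child_inj hc)

lemma disjoint_child (Q : DyadicCube n) {ε ε' : Fin n → Bool} (h : ε ≠ ε') :
    Disjoint (Q.child ε).toSet (Q.child ε').toSet :=
  disjoint_of_same_k rfl (child_ne Q h)


lemma measure_children (μ : Measure (Fin n → ℝ)) (Q : DyadicCube n)
    (g : (Fin n → ℝ) → ℝ≥0∞) :
    ∫⁻ x in Q.toSet, g x ∂μ = ∑ ε : Fin n → Bool, ∫⁻ x in (Q.child ε).toSet, g x ∂μ := by
  rw [← iUnion_child Q, lintegral_iUnion (fun ε => measurableSet_toSet _)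
    (fun ε ε' h => disjoint_child Q h), tsum_fintype]

/-- Descendants of `R` within `d` generations. -/
noncomputable def Dset : ℕ → DyadicCube n → Finset (DyadicCube n)
  | 0, R => {R}
  | d+1, R => {R} ∪ Finset.univ.biUnion fun ε => Dset d (R.child ε)

lemma mem_Dset {d : ℕ} {Q R : DyadicCube n} :
    Q ∈ Dset d R ↔ ∃ r, r ≤ d ∧ Q.iterParent r = R := by
  induction d generalizing R with
  | zero =>
    simp only [Dset, Finset.mem_singleton]
    constructor
    · rintro rfl; exact ⟨0, le_refl _, rfl⟩
    · rintro ⟨r, hr, hQ⟩; rw [Nat.le_zero.mp hr] at hQ; exact hQ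
  | succ d ih =>
    simp only [Dset, Finset.mem_union, Finset.mem_singleton, Finset.mem_biUnion,
      Finset.mem_univ, true_and]
    constructor
    · rintro (rfl | ⟨ε, hQ⟩)
      · exact ⟨0, Nat.zero_le _, rfl⟩
      · obtain ⟨r, hr, hQ⟩ := ih.mp hQ
        exact ⟨r + 1, Nat.succ_le_succ hr, by rw [iterParent_succ, hQ, parent_child]⟩
    · rintro ⟨r, hr, hQ⟩
      cases r with
      | zero => left; exact hQ
      | succ r =>
        right
        rw [iterParent_succ] at hQ
        obtain ⟨ε, hε⟩ := eq_child_of_parent_eq hQ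
        exact ⟨ε, ih.mpr ⟨r, Nat.le_of_succ_le_succ hr, hε⟩⟩

lemma self_mem_Dset (d : ℕ) (R : DyadicCube n) : R ∈ Dset d R :=
  mem_Dset.mpr ⟨0, Nat.zero_le _, rfl⟩

lemma toSet_subset_of_mem_Dset {d : ℕ} {Q R : DyadicCube n} (h : Q ∈ Dset d R) :
    Q.toSet ⊆ R.toSet := by
  obtain ⟨r, _, hQ⟩ := mem_Dset.mp h
  rw [← hQ]; exact toSet_subset_iterParent Q r

lemma k_le_of_mem_Dset {d : ℕ} {Q R : DyadicCube n} (h : Q ∈ Dset d R) : Q.k ≤ R.k := by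
  obtain ⟨r, _, hQ⟩ := mem_Dset.mp h
  have := k_iterParent Q r
  rw [hQ] at this
  omega

lemma sum_Dset_succ (h : DyadicCube n → ℝ≥0∞) (d : ℕ) (R : DyadicCube n) :
    ∑ Q ∈ Dset (d+1) R, h Q = h R + ∑ ε : Fin n → Bool, ∑ Q ∈ Dset d (R.child ε), h Q := by
  have hR : R ∉ Finset.univ.biUnion fun ε => Dset d (R.child ε) := by
    simp only [Finset.mem_biUnion, Finset.mem_univ, true_and, not_exists]
    intro ε hmem
    have := k_le_of_mem_Dset hmem
    rw [child_k] at this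
    omega
  have hdisj : ∀ ε ∈ (Finset.univ : Finset (Fin n → Bool)), ∀ ε' ∈ Finset.univ, ε ≠ ε' →
      Disjoint (Dset d (R.child ε)) (Dset d (R.child ε')) := by
    intro ε _ ε' _ hne
    rw [Finset.disjoint_left]
    intro Q hQ hQ'
    obtain ⟨r, _, h1⟩ := mem_Dset.mp hQ
    obtain ⟨r', _, h2⟩ := mem_Dset.mp hQ'
    have hk1 := k_iterParent Q r
    have hk2 := k_iterParent Q r'
    rw [h1] at hk1; rw [h2] at hk2
    rw [child_k] at hk1 hk2
    have : r = r' := by omega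
    rw [this, h2] at h1
    exact child_ne R hne h1.symm
  show ∑ Q ∈ {R} ∪ _, h Q = _
  rw [Finset.sum_union (Finset.disjoint_singleton_left.mpr hR), Finset.sum_singleton,
    Finset.sum_biUnion hdisj]

/-! ### ENNReal helper lemmas -/

lemma ENNReal.div_ne_top' {a b : ℝ≥0∞} (ha : a ≠ ⊤) (hb : b ≠ 0) : a / b ≠ ⊤ :=
  (ENNReal.div_lt_top ha hb).ne

lemma ennreal_two_term {x y w v : ℝ≥0∞} (hw : w ≠ ⊤) (hv : v ≠ ⊤)
    (hwx : w = 0 → x = 0) (hvy : v = 0 → y = 0) :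
    (x + y) ^ 2 / (w + v) ≤ x ^ 2 / w + y ^ 2 / v := by
  by_cases hw0 : w = 0
  · rw [hw0, hwx hw0, zero_add, zero_add]
    simp
  by_cases hv0 : v = 0
  · rw [hv0, hvy hv0, add_zero, add_zero]
    simp
  by_cases hx : x = ⊤
  · rw [hx]
    have : (⊤:ℝ≥0∞) ^ 2 / w = ⊤ := by
      rw [ENNReal.top_pow (by norm_num), ENNReal.top_div_of_ne_top hw]
    rw [this]
    exact le_top.trans_eq (by simp)
  by_cases hy : y = ⊤
  · rw [hy]
    have : (⊤:ℝ≥0∞) ^ 2 / v = ⊤ := by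
      rw [ENNReal.top_pow (by norm_num), ENNReal.top_div_of_ne_top hv]
    rw [this]
    simp
  -- all finite
  have hLfin : (x + y) ^ 2 / (w + v) ≠ ⊤ := by
    apply ENNReal.div_ne_top'
    · exact ENNReal.pow_ne_top (ENNReal.add_ne_top.mpr ⟨hx, hy⟩)
    · simp [hw0]
  have hRfin : x ^ 2 / w + y ^ 2 / v ≠ ⊤ := by
    apply ENNReal.add_ne_top.mpr
    constructor
    · exact ENNReal.div_ne_top' (ENNReal.pow_ne_top hx) hw0
    · exact ENNReal.div_ne_top' (ENNReal.pow_ne_top hy) hv0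
  rw [← ENNReal.toReal_le_toReal hLfin hRfin,
    ENNReal.toReal_add (ENNReal.div_ne_top' (ENNReal.pow_ne_top hx) hw0)
      (ENNReal.div_ne_top' (ENNReal.pow_ne_top hy) hv0)]
  simp only [ENNReal.toReal_div, ENNReal.toReal_pow, ENNReal.toReal_add hx hy,
    ENNReal.toReal_add hw hv]
  set X := x.toReal
  set Y := y.toReal
  set W := w.toReal
  set V := v.toReal
  have hW : 0 < W := ENNReal.toReal_pos hw0 hw
  have hV : 0 < V := ENNReal.toReal_pos hv0 hv
  have hX : 0 ≤ X := ENNReal.toReal_nonneg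
  have hY : 0 ≤ Y := ENNReal.toReal_nonneg
  rw [div_add_div _ _ (ne_of_gt hW) (ne_of_gt hV), div_le_div_iff₀ (by positivity) (by positivity)]
  nlinarith [sq_nonneg (X*V - Y*W), sq_nonneg (X+Y), mul_pos hW hV]

lemma ennreal_CS {ι : Type*} (s : Finset ι) (x w : ι → ℝ≥0∞)
    (hw : ∀ i ∈ s, w i ≠ ⊤) (hwx : ∀ i ∈ s, w i = 0 → x i = 0) :
    (∑ i ∈ s, x i) ^ 2 / (∑ i ∈ s, w i) ≤ ∑ i ∈ s, x i ^ 2 / w i := by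
  classical
  induction s using Finset.cons_induction with
  | empty => simp
  | cons a s ha ih =>
    rw [Finset.sum_cons, Finset.sum_cons, Finset.sum_cons]
    have h1 : (∑ i ∈ s, w i) ≠ ⊤ := by
      rw [← lt_top_iff_ne_top]
      exact ENNReal.sum_lt_top.mpr fun i hi => lt_top_iff_ne_top.mpr (hw i (Finset.mem_cons_of_mem hi))
    have h2 : (∑ i ∈ s, w i) = 0 → (∑ i ∈ s, x i) = 0 := by
      intro h
      rw [Finset.sum_eq_zero_iff] at h ⊢
      exact fun i hi => hwx i (Finset.mem_cons_of_mem hi) (h i hi)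
    calc (x a + ∑ i ∈ s, x i) ^ 2 / (w a + ∑ i ∈ s, w i)
        ≤ x a ^ 2 / w a + (∑ i ∈ s, x i) ^ 2 / (∑ i ∈ s, w i) :=
          ennreal_two_term (hw a (Finset.mem_cons_self a s)) h1
            (hwx a (Finset.mem_cons_self a s)) h2
      _ ≤ x a ^ 2 / w a + ∑ i ∈ s, x i ^ 2 / w i := by
          exact add_le_add_right (ih (fun i hi => hw i (Finset.mem_cons_of_mem hi))
            (fun i hi => hwx i (Finset.mem_cons_of_mem hi))) _

lemma div_sq_mul (a b : ℝ≥0∞) (hb0 : b ≠ 0) (hbt : b ≠ ⊤) : (a / b) ^ 2 * b = a ^ 2 / b := by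
  rw [div_eq_mul_inv, mul_pow, div_eq_mul_inv, pow_two b⁻¹, mul_assoc, mul_assoc,
    ENNReal.inv_mul_cancel hb0 hbt, mul_one]

/-- Core scalar inequality of the Bellman argument. -/
lemma core_ineq {i m W Λ : ℝ≥0∞} (hΛ1 : 1 ≤ Λ) (hΛt : Λ ≠ ⊤) (hmt : m ≠ ⊤) (hit : i ≠ ⊤)
    (hmi : m = 0 → i = 0) (hmW : m ≤ W) (hW2 : W ≤ 2 * m) :
    i ^ 2 / m + 6 * Λ * (i ^ 2 / (W + m / Λ)) ≤ 6 * Λ * (i ^ 2 / W) := by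
  have hΛ0 : Λ ≠ 0 := by intro h; rw [h] at hΛ1; simp at hΛ1
  by_cases hm0 : m = 0
  · have hi0 : i = 0 := hmi hm0
    have hW0 : W = 0 := le_antisymm (by rw [hm0] at hW2; simpa using hW2) zero_le
    simp [hi0, hm0, hW0]
  have hWt : W ≠ ⊤ := (lt_of_le_of_lt hW2 (by finiteness)).ne
  have hW0 : W ≠ 0 := fun h => hm0 (le_antisymm (h ▸ hmW) zero_le)
  have hmΛt : m / Λ ≠ ⊤ := ENNReal.div_ne_top' hmt hΛ0
  have hD1t : W + m / Λ ≠ ⊤ := ENNReal.add_ne_top.mpr ⟨hWt, hmΛt⟩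
  have hD10 : W + m / Λ ≠ 0 := by simp [hW0]
  have hfin1 : i ^ 2 / m ≠ ⊤ := ENNReal.div_ne_top' (ENNReal.pow_ne_top hit) hm0
  have hfin2 : 6 * Λ * (i ^ 2 / (W + m / Λ)) ≠ ⊤ := by
    apply ENNReal.mul_ne_top (by finiteness)
    exact ENNReal.div_ne_top' (ENNReal.pow_ne_top hit) hD10
  have hfin3 : 6 * Λ * (i ^ 2 / W) ≠ ⊤ := by
    apply ENNReal.mul_ne_top (by finiteness)
    exact ENNReal.div_ne_top' (ENNReal.pow_ne_top hit) hW0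
  rw [← ENNReal.toReal_le_toReal (ENNReal.add_ne_top.mpr ⟨hfin1, hfin2⟩) hfin3,
    ENNReal.toReal_add hfin1 hfin2, ENNReal.toReal_mul, ENNReal.toReal_mul, ENNReal.toReal_mul,
    ENNReal.toReal_mul, ENNReal.toReal_div, ENNReal.toReal_div, ENNReal.toReal_div,
    ENNReal.toReal_add hWt hmΛt, ENNReal.toReal_div, ENNReal.toReal_pow]
  have h6 : ((6:ℝ≥0∞)).toReal = 6 := by norm_num
  rw [h6]
  set I := i.toReal
  set M := m.toReal
  set WW := W.toReal
  set L := Λ.toReal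
  have hM : 0 < M := ENNReal.toReal_pos hm0 hmt
  have hL : 1 ≤ L := by
    rw [← ENNReal.toReal_one]
    exact ENNReal.toReal_mono hΛt hΛ1
  have hL0 : 0 < L := by linarith
  have hMW : M ≤ WW := ENNReal.toReal_mono hWt hmW
  have hW2' : WW ≤ 2 * M := by
    have := ENNReal.toReal_mono (by finiteness) hW2
    rwa [ENNReal.toReal_mul, ENNReal.toReal_ofNat] at this
  have hI : 0 ≤ I := ENNReal.toReal_nonneg
  have hWW : 0 < WW := lt_of_lt_of_le hM hMW
  have hq : 0 < M / L := by positivity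
  have hD1 : 0 < WW + M / L := by positivity
  have key : 1 / M + 6 * L / (WW + M / L) ≤ 6 * L / WW := by
    rw [div_add_div _ _ (ne_of_gt hM) (ne_of_gt hD1), div_le_div_iff₀ (by positivity) hWW]
    have hqL : M / L * L = M := div_mul_cancel₀ M (ne_of_gt hL0)
    have hqM : M / L ≤ M := by
      rw [div_le_iff₀ hL0]; nlinarith
    nlinarith [mul_pos hM hWW, mul_pos hWW hWW, sq_nonneg (WW - M), mul_le_mul hW2' hqM (le_of_lt hq) (by linarith)]
  calc I ^ 2 / M + 6 * L * (I ^ 2 / (WW + M / L))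
      = I ^ 2 * (1 / M + 6 * L / (WW + M / L)) := by ring
    _ ≤ I ^ 2 * (6 * L / WW) := by
        apply mul_le_mul_of_nonneg_left key (by positivity)
    _ = 6 * L * (I ^ 2 / WW) := by ring


/-! ### The Bellman-function induction -/

section Bellman

variable (μ : Measure (Fin n → ℝ)) (S : Set (DyadicCube n)) (g : (Fin n → ℝ) → ℝ≥0∞)

/-- `∫_Q g dμ`. -/
noncomputable def II (Q : DyadicCube n) : ℝ≥0∞ := ∫⁻ x in Q.toSet, g x ∂μ

/-- `∫_Q g² dμ`. -/
noncomputable def FF (Q : DyadicCube n) : ℝ≥0∞ := ∫⁻ x in Q.toSet, g x ^ 2 ∂μ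

/-- `(∫_Q g)² / μ(Q)`. -/
noncomputable def sq (Q : DyadicCube n) : ℝ≥0∞ := (II μ g Q) ^ 2 / μ Q.toSet

/-- Packing sum over `S`-descendants. -/
noncomputable def PP (d : ℕ) (R : DyadicCube n) : ℝ≥0∞ :=
  ∑ Q ∈ Dset d R, S.indicator (fun Q => μ Q.toSet) Q

/-- Sum of `(avg)² μ(Q)` over `S`-descendants. -/
noncomputable def TT (d : ℕ) (R : DyadicCube n) : ℝ≥0∞ :=
  ∑ Q ∈ Dset d R, S.indicator (sq μ g) Q

variable {μ S g}
variable {Λ : ℝ≥0∞} (hΛ1 : 1 ≤ Λ) (hΛt : Λ ≠ ⊤)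
variable (hfin : ∀ Q : DyadicCube n, μ Q.toSet < ⊤)
variable (hsp : IsSparse μ S Λ)
variable (hg : AEMeasurable g μ) (hg2 : ∫⁻ x, g x ^ 2 ∂μ ≠ ⊤)

include hsp in
lemma PP_le (d : ℕ) (R : DyadicCube n) : PP μ S d R ≤ Λ * μ R.toSet := by
  classical
  have h1 : PP μ S d R
      = ∑ Q ∈ (Dset d R).filter (fun Q => Q ∈ S ∧ Q.toSet ⊆ R.toSet), μ Q.toSet := by
    rw [PP, Finset.sum_indicator_eq_sum_filter]
    apply Finset.sum_congr _ (fun _ _ => rfl)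
    apply Finset.filter_congr
    intro Q hQ
    simp only [iff_self_and]
    exact fun _ => toSet_subset_of_mem_Dset hQ
  rw [h1, ← Finset.sum_subtype_eq_sum_filter]
  exact le_trans (ENNReal.sum_le_tsum _) (hsp R)

include hg hg2 hfin in
lemma II_sq_le (Q : DyadicCube n) : II μ g Q ^ 2 ≤ μ Q.toSet * FF μ g Q := by
  have hpq : Real.HolderConjugate 2 2 := by constructor <;> norm_num
  have h := ENNReal.lintegral_mul_le_Lp_mul_Lq (μ.restrict Q.toSet) hpq
    (hg.restrict) (aemeasurable_const (b := (1:ℝ≥0∞)))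
  simp only [Pi.mul_apply, mul_one, ENNReal.one_rpow, lintegral_const, one_mul,
    Measure.restrict_apply MeasurableSet.univ, Set.univ_inter] at h
  have h2 : ∫⁻ x in Q.toSet, g x ^ (2:ℝ) ∂μ = FF μ g Q := by
    apply lintegral_congr
    intro x
    rw [← ENNReal.rpow_natCast (g x) 2]
    norm_num
  rw [h2] at h
  calc II μ g Q ^ 2 ≤ ((FF μ g Q) ^ (1/(2:ℝ)) * (μ Q.toSet) ^ (1/(2:ℝ))) ^ 2 := by
        apply pow_le_pow_left' h
    _ = μ Q.toSet * FF μ g Q := by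
        rw [mul_pow, ← ENNReal.rpow_natCast ((FF μ g Q) ^ (1/(2:ℝ))) 2,
          ← ENNReal.rpow_natCast ((μ Q.toSet) ^ (1/(2:ℝ))) 2,
          ← ENNReal.rpow_mul, ← ENNReal.rpow_mul]
        norm_num [mul_comm]

include hg hg2 hfin in
lemma II_ne_top (Q : DyadicCube n) : II μ g Q ≠ ⊤ := by
  have h := II_sq_le hfin hg hg2 Q
  intro htop
  rw [htop] at h
  have hFF : FF μ g Q ≤ ∫⁻ x, g x ^ 2 ∂μ := setLIntegral_le_lintegral _ _
  have : μ Q.toSet * FF μ g Q ≠ ⊤ :=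
    ENNReal.mul_ne_top (hfin Q).ne (hFF.trans_lt (lt_top_iff_ne_top.mpr hg2)).ne
  simp [ENNReal.top_pow] at h
  exact this h

lemma II_zero_of_null {Q : DyadicCube n} (h : μ Q.toSet = 0) : II μ g Q = 0 :=
  setLIntegral_measure_zero _ _ h

include hg hg2 hfin in
lemma sq_le_FF (Q : DyadicCube n) : sq μ g Q ≤ FF μ g Q := by
  rw [sq]
  by_cases h0 : μ Q.toSet = 0
  · rw [II_zero_of_null h0]
    simp
  · rw [ENNReal.div_le_iff h0 (hfin Q).ne]
    rw [mul_comm]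
    exact II_sq_le hfin hg hg2 Q

lemma Dset_zero (R : DyadicCube n) : Dset 0 R = {R} := rfl

include hΛ1 hΛt hfin hsp hg hg2 in
lemma bellman (d : ℕ) : ∀ R : DyadicCube n,
    TT μ S g d R + 6 * Λ * (II μ g R ^ 2 / (μ R.toSet + PP μ S d R / Λ)) ≤
      6 * Λ * FF μ g R := by
  classical
  have hΛ0 : Λ ≠ 0 := by intro h; rw [h] at hΛ1; simp at hΛ1
  have hcore : ∀ (R : DyadicCube n) (W : ℝ≥0∞), R ∈ S → μ R.toSet ≤ W → W ≤ 2 * μ R.toSet →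
      sq μ g R + 6 * Λ * (II μ g R ^ 2 / (W + μ R.toSet / Λ)) ≤ 6 * Λ * (II μ g R ^ 2 / W) := by
    intro R W _ hmW hW2
    rw [sq]
    exact core_ineq hΛ1 hΛt (hfin R).ne (II_ne_top hfin hg hg2 R)
      (fun h => II_zero_of_null h) hmW hW2
  induction d with
  | zero =>
    intro R
    rw [TT, PP, Dset_zero, Finset.sum_singleton, Finset.sum_singleton]
    by_cases hRS : R ∈ S
    · rw [Set.indicator_of_mem hRS, Set.indicator_of_mem hRS]
      calc sq μ g R + 6 * Λ * (II μ g R ^ 2 / (μ R.toSet + μ R.toSet / Λ))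
          ≤ 6 * Λ * (II μ g R ^ 2 / μ R.toSet) :=
            hcore R (μ R.toSet) hRS le_rfl (by rw [two_mul]; exact le_add_self)
        _ ≤ 6 * Λ * FF μ g R := by
            apply mul_le_mul_right
            rw [← sq]
            exact sq_le_FF hfin hg hg2 R
    · rw [Set.indicator_of_notMem hRS, Set.indicator_of_notMem hRS, zero_add,
        ENNReal.zero_div, add_zero]
      apply mul_le_mul_right
      rw [← sq]
      exact sq_le_FF hfin hg hg2 R
  | succ d ih =>
    intro R
    set m := fun Q : DyadicCube n => μ Q.toSet with hm_def
    have hTT : TT μ S g (d+1) R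
        = S.indicator (sq μ g) R + ∑ ε : Fin n → Bool, TT μ S g d (R.child ε) :=
      sum_Dset_succ _ d R
    have hPP : PP μ S (d+1) R
        = S.indicator m R + ∑ ε : Fin n → Bool, PP μ S d (R.child ε) :=
      sum_Dset_succ _ d R
    set w := fun ε : Fin n → Bool => m (R.child ε) + PP μ S d (R.child ε) / Λ with hw_def
    have hPPle : ∀ (d' : ℕ) (Q : DyadicCube n), PP μ S d' Q / Λ ≤ m Q := by
      intro d' Q
      rw [ENNReal.div_le_iff hΛ0 hΛt]
      rw [mul_comm]
      exact PP_le hsp d' Q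
    have hwne : ∀ ε, w ε ≠ ⊤ := by
      intro ε
      apply ENNReal.add_ne_top.mpr
      exact ⟨(hfin _).ne, ((hPPle d _).trans_lt (hfin _)).ne⟩
    have hwz : ∀ ε, w ε = 0 → II μ g (R.child ε) = 0 := by
      intro ε h
      rw [add_eq_zero] at h
      exact II_zero_of_null h.1
    have hIIsum : II μ g R = ∑ ε : Fin n → Bool, II μ g (R.child ε) :=
      measure_children μ R g
    have hFFsum : FF μ g R = ∑ ε : Fin n → Bool, FF μ g (R.child ε) :=
      measure_children μ R _
    have hmsum : m R = ∑ ε : Fin n → Bool, m (R.child ε) := by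
      have := measure_children μ R (fun _ => (1:ℝ≥0∞))
      simpa [setLIntegral_one] using this
    have hCS : II μ g R ^ 2 / (∑ ε : Fin n → Bool, w ε)
        ≤ ∑ ε : Fin n → Bool, II μ g (R.child ε) ^ 2 / w ε := by
      rw [hIIsum]
      exact ennreal_CS Finset.univ _ w (fun ε _ => hwne ε) (fun ε _ h => hwz ε h)
    have hWsum : (∑ ε : Fin n → Bool, w ε)
        = m R + (∑ ε : Fin n → Bool, PP μ S d (R.child ε)) / Λ := by
      rw [hw_def]
      simp only [div_eq_mul_inv]
      rw [Finset.sum_add_distrib, ← Finset.sum_mul, ← hmsum]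
    have hsumIH : ∑ ε : Fin n → Bool, TT μ S g d (R.child ε)
        + 6 * Λ * (∑ ε : Fin n → Bool, II μ g (R.child ε) ^ 2 / w ε)
        ≤ 6 * Λ * FF μ g R := by
      rw [hFFsum, Finset.mul_sum, Finset.mul_sum, ← Finset.sum_add_distrib]
      exact Finset.sum_le_sum fun ε _ => ih (R.child ε)
    by_cases hRS : R ∈ S
    · have hden : m R + PP μ S (d+1) R / Λ
          = (∑ ε : Fin n → Bool, w ε) + m R / Λ := by
        rw [hPP, Set.indicator_of_mem hRS, ENNReal.add_div, hWsum]
        ring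
      have hWle : (∑ ε : Fin n → Bool, w ε) ≤ 2 * m R := by
        rw [hWsum, two_mul]
        apply add_le_add_right
        calc (∑ ε : Fin n → Bool, PP μ S d (R.child ε)) / Λ
            ≤ PP μ S (d+1) R / Λ := by
              apply ENNReal.div_le_div_right
              rw [hPP]
              exact le_add_self
          _ ≤ m R := hPPle (d+1) R
      have hWge : m R ≤ ∑ ε : Fin n → Bool, w ε := by
        rw [hWsum]; exact le_self_add
      calc TT μ S g (d+1) R + 6 * Λ * (II μ g R ^ 2 / (m R + PP μ S (d+1) R / Λ))
          = S.indicator (sq μ g) R + (∑ ε : Fin n → Bool, TT μ S g d (R.child ε))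
            + 6 * Λ * (II μ g R ^ 2 / ((∑ ε : Fin n → Bool, w ε) + m R / Λ)) := by
            rw [hTT, hden]
        _ = (∑ ε : Fin n → Bool, TT μ S g d (R.child ε)) + (sq μ g R
            + 6 * Λ * (II μ g R ^ 2 / ((∑ ε : Fin n → Bool, w ε) + m R / Λ))) := by
            rw [Set.indicator_of_mem hRS]; ring
        _ ≤ (∑ ε : Fin n → Bool, TT μ S g d (R.child ε))
            + 6 * Λ * (II μ g R ^ 2 / (∑ ε : Fin n → Bool, w ε)) := by
            apply add_le_add_right
            exact hcore R _ hRS hWge hWle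
        _ ≤ (∑ ε : Fin n → Bool, TT μ S g d (R.child ε))
            + 6 * Λ * (∑ ε : Fin n → Bool, II μ g (R.child ε) ^ 2 / w ε) := by
            apply add_le_add_right
            exact mul_le_mul_right hCS _
        _ ≤ 6 * Λ * FF μ g R := hsumIH
    · have hden : m R + PP μ S (d+1) R / Λ = ∑ ε : Fin n → Bool, w ε := by
        rw [hPP, Set.indicator_of_notMem hRS, zero_add, hWsum]
      calc TT μ S g (d+1) R + 6 * Λ * (II μ g R ^ 2 / (m R + PP μ S (d+1) R / Λ))
          = (∑ ε : Fin n → Bool, TT μ S g d (R.child ε))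
            + 6 * Λ * (II μ g R ^ 2 / (∑ ε : Fin n → Bool, w ε)) := by
            rw [hTT, hden, Set.indicator_of_notMem hRS, zero_add]
        _ ≤ (∑ ε : Fin n → Bool, TT μ S g d (R.child ε))
            + 6 * Λ * (∑ ε : Fin n → Bool, II μ g (R.child ε) ^ 2 / w ε) := by
            apply add_le_add_right
            exact mul_le_mul_right hCS _
        _ ≤ 6 * Λ * FF μ g R := hsumIH

include hΛ1 hΛt hfin hsp hg hg2 in
lemma TT_le (d : ℕ) (R : DyadicCube n) : TT μ S g d R ≤ 6 * Λ * FF μ g R :=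
  le_trans le_self_add (bellman hΛ1 hΛt hfin hsp hg hg2 d R)

end Bellman

lemma term_le {μ : Measure (Fin n → ℝ)} {f : (Fin n → ℝ) → ℝ}
    (hfin : ∀ Q : DyadicCube n, μ Q.toSet < ⊤)
    (hg : AEMeasurable (fun x => (‖f x‖₊ : ℝ≥0∞)) μ)
    (hg2 : ∫⁻ x, (‖f x‖₊ : ℝ≥0∞) ^ 2 ∂μ ≠ ⊤) (Q : DyadicCube n) :
    ENNReal.ofReal ((avg μ f Q) ^ 2) * μ Q.toSet
      ≤ sq μ (fun x => (‖f x‖₊ : ℝ≥0∞)) Q := by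
  set g := fun x : Fin n → ℝ => ((‖f x‖₊ : ℝ≥0∞)) with hgdef
  by_cases h0 : μ Q.toSet = 0
  · rw [avg, if_pos h0, h0]; simp
  rw [avg, if_neg h0]
  have hIt : II μ g Q ≠ ⊤ := II_ne_top hfin hg hg2 Q
  have hmt : μ Q.toSet ≠ ⊤ := (hfin Q).ne
  have hmr : 0 < (μ Q.toSet).toReal := ENNReal.toReal_pos h0 hmt
  have habs : |∫ x in Q.toSet, f x ∂μ| ≤ (II μ g Q).toReal := by
    have h := norm_integral_le_lintegral_norm (μ := μ.restrict Q.toSet) f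
    rw [Real.norm_eq_abs] at h
    refine h.trans (le_of_eq ?_)
    congr 1
    apply lintegral_congr
    intro x
    rw [ofReal_norm]; rfl
  calc ENNReal.ofReal (((∫ x in Q.toSet, f x ∂μ) / (μ Q.toSet).toReal) ^ 2) * μ Q.toSet
      ≤ ENNReal.ofReal (((II μ g Q).toReal / (μ Q.toSet).toReal) ^ 2) * μ Q.toSet := by
        apply mul_le_mul_left
        apply ENNReal.ofReal_le_ofReal
        rw [← sq_abs (_ / _), abs_div, abs_of_pos hmr]
        apply pow_le_pow_left₀ (by positivity)
        gcongr
    _ = (II μ g Q / μ Q.toSet) ^ 2 * μ Q.toSet := by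
        rw [ENNReal.ofReal_pow (by positivity), ENNReal.ofReal_div_of_pos hmr,
          ENNReal.ofReal_toReal hIt, ENNReal.ofReal_toReal hmt]
    _ = sq μ g Q := div_sq_mul _ _ h0 hmt

lemma lintegral_sq_eq (μ : Measure (Fin n → ℝ)) (f : (Fin n → ℝ) → ℝ) :
    ∫⁻ x, ((‖f x‖₊ : ℝ≥0∞)) ^ 2 ∂μ = eLpNorm f 2 μ ^ 2 := by
  rw [eLpNorm_eq_lintegral_rpow_enorm_toReal (by norm_num) (by norm_num)]
  have h2 : (2 : ℝ≥0∞).toReal = 2 := by norm_num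
  rw [h2, ← ENNReal.rpow_natCast _ 2, ← ENNReal.rpow_mul]
  norm_num; rfl

end SparseAux

open SparseAux

/-- For a `μ`-sparse family `𝒮` of dyadic cubes,
`∑_{Q ∈ 𝒮} |⟨f⟩^μ_Q|² μ(Q) ≤ C ‖f‖²_{L²(μ)}` with `C` depending only on the sparseness
constant. -/
theorem sparse_family_average_bound (Λ : ℝ≥0∞) (hΛ : Λ ≠ ⊤) :
    ∃ C : ℝ≥0∞, C ≠ ⊤ ∧
      ∀ (n : ℕ) (μ : Measure (Fin n → ℝ)),
        (∀ Q : DyadicCube n, μ Q.toSet < ⊤) →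
        ∀ S : Set (DyadicCube n), IsSparse μ S Λ →
          ∀ f : (Fin n → ℝ) → ℝ, MemLp f 2 μ →
            ∑' Q : S, ENNReal.ofReal ((avg μ f Q.1) ^ 2) * μ Q.1.toSet
              ≤ C * eLpNorm f 2 μ ^ 2 := by
  classical
  have hΛt : max Λ 1 ≠ ⊤ := (max_lt (lt_top_iff_ne_top.mpr hΛ) (by norm_num)).ne
  refine ⟨6 * max Λ 1, ENNReal.mul_ne_top (by norm_num) hΛt, ?_⟩
  intro n μ hfin S hsp f hf
  set Λ' := max Λ 1 with hΛ'def
  have hΛ1 : 1 ≤ Λ' := le_max_right _ _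
  have hsp' : IsSparse μ S Λ' := fun R => (hsp R).trans (mul_le_mul_left (le_max_left _ _) _)
  set g : (Fin n → ℝ) → ℝ≥0∞ := fun x => (‖f x‖₊ : ℝ≥0∞) with hgdef
  have hg : AEMeasurable g μ := hf.1.enorm
  have hsnorm : ∫⁻ x, g x ^ 2 ∂μ = eLpNorm f 2 μ ^ 2 := lintegral_sq_eq μ f
  have hg2 : ∫⁻ x, g x ^ 2 ∂μ ≠ ⊤ := by
    rw [hsnorm]; exact ENNReal.pow_ne_top hf.2.ne
  rw [ENNReal.tsum_eq_iSup_sum]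
  refine iSup_le fun s => ?_
  have hsum_u : ∑ q ∈ s, ENNReal.ofReal ((avg μ f q.1) ^ 2) * μ q.1.toSet
      = ∑ Q ∈ s.image (fun q => q.1),
          ENNReal.ofReal ((avg μ f Q) ^ 2) * μ Q.toSet := by
    rw [Finset.sum_image (fun a _ b _ h => Subtype.val_injective h)]
  rw [hsum_u]
  set u := s.image (fun q => q.1) with hudef
  have huS : ∀ Q ∈ u, Q ∈ S := by
    intro Q hQ
    rw [hudef, Finset.mem_image] at hQ
    obtain ⟨q, _, rfl⟩ := hQ
    exact q.2
  rcases u.eq_empty_or_nonempty with hu0 | hune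
  · rw [hu0]; simp
  set N := (u.image DyadicCube.k).max' (hune.image _) with hNdef
  have hkN : ∀ Q ∈ u, Q.k ≤ N := fun Q hQ =>
    Finset.le_max' _ _ (Finset.mem_image_of_mem _ hQ)
  set rr := fun Q : DyadicCube n => (N - Q.k).toNat with hrrdef
  set anc := fun Q : DyadicCube n => Q.iterParent (rr Q) with hancdef
  set d := u.sup rr with hddef
  set A := u.image anc with hAdef
  have hancK : ∀ Q ∈ u, (anc Q).k = N := by
    intro Q hQ
    have h1 : ((N - Q.k).toNat : ℤ) = N - Q.k := Int.toNat_of_nonneg (by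
      have := hkN Q hQ; omega)
    rw [hancdef]
    simp only [k_iterParent, hrrdef, h1]
    ring
  have hAK : ∀ R ∈ A, R.k = N := by
    intro R hR
    rw [hAdef, Finset.mem_image] at hR
    obtain ⟨Q, hQ, rfl⟩ := hR
    exact hancK Q hQ
  have hmemD : ∀ Q ∈ u, Q ∈ Dset d (anc Q) := fun Q hQ =>
    mem_Dset.mpr ⟨rr Q, Finset.le_sup hQ, rfl⟩
  calc ∑ Q ∈ u, ENNReal.ofReal ((avg μ f Q) ^ 2) * μ Q.toSet
      ≤ ∑ Q ∈ u, S.indicator (sq μ g) Q := by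
        apply Finset.sum_le_sum
        intro Q hQ
        rw [Set.indicator_of_mem (huS Q hQ)]
        exact term_le hfin hg hg2 Q
    _ = ∑ R ∈ A, ∑ Q ∈ u.filter (fun Q => anc Q = R), S.indicator (sq μ g) Q := by
        rw [Finset.sum_fiberwise_of_maps_to (fun Q hQ => Finset.mem_image_of_mem _ hQ)]
    _ ≤ ∑ R ∈ A, TT μ S g d R := by
        apply Finset.sum_le_sum
        intro R _
        apply Finset.sum_le_sum_of_subset
        intro Q hQ
        rw [Finset.mem_filter] at hQ
        have := hmemD Q hQ.1
        rwa [hQ.2] at this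
    _ ≤ ∑ R ∈ A, 6 * Λ' * FF μ g R := by
        apply Finset.sum_le_sum
        intro R _
        exact TT_le hΛ1 hΛt hfin hsp' hg hg2 d R
    _ = 6 * Λ' * ∑ R ∈ A, FF μ g R := by rw [Finset.mul_sum]
    _ ≤ 6 * Λ' * ∫⁻ x, g x ^ 2 ∂μ := by
        apply mul_le_mul_right
        have hdisj : Set.PairwiseDisjoint (↑A) (fun R : DyadicCube n => R.toSet) := by
          intro R hR R' hR' hne
          exact disjoint_of_same_k (by rw [hAK R hR, hAK R' hR']) hne
        have := lintegral_biUnion_finset (μ := μ) hdisj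
          (fun R _ => measurableSet_toSet R) (fun x => g x ^ 2)
        calc ∑ R ∈ A, FF μ g R = ∫⁻ x in ⋃ R ∈ A, R.toSet, g x ^ 2 ∂μ := this.symm
          _ ≤ ∫⁻ x, g x ^ 2 ∂μ := setLIntegral_le_lintegral _ _
    _ = 6 * Λ' * eLpNorm f 2 μ ^ 2 := by rw [hsnorm]
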